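/- Define real functions f_0(x) = e^x and f_{i+1}(x) = exp(f_i(x) − 1) for each integer i ≥ 0. Then for every integer k ≥ 0, every integer p ≥ 1, and every real x > 0, bell_k(p) · x^p ≤ p! · (f_k(x) − 1). -/

import Mathlib

/-- `Q` is a refinement of `P`: every part of `Q` is contained in some part of `P`. -/
def FPRefines {p : ℕ} (Q P : Finpartition (Finset.univ : Finset (Fin p))) : Prop :=
  ∀ a ∈ Q.parts, ∃ b ∈ P.parts, a ⊆ b

/-- `f = (T_1, …, T_k)` is a `k`-level (hierarchical) partition of `[p]`: each `T_{i+1}`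
is a refinement of `T_i`. -/
def IsKLevel {p : ℕ} (k : ℕ)
    (f : Fin k → Finpartition (Finset.univ : Finset (Fin p))) : Prop :=
  ∀ (i : ℕ) (h : i + 1 < k), FPRefines (f ⟨i + 1, h⟩) (f ⟨i, Nat.lt_of_succ_lt h⟩)

/-- The order-`k` Bell number `bell_k(p)`: the number of `k`-level hierarchical partitions
of `[p]` (so `bell_0(p) = 1`). -/
noncomputable def bellk (k p : ℕ) : ℕ :=
  Nat.card {f : Fin k → Finpartition (Finset.univ : Finset (Fin p)) // IsKLevel k f}

/-- The real functions `f_0(x) = e^x`, `f_{i+1}(x) = exp(f_i(x) − 1)`. -/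
noncomputable def fIter : ℕ → ℝ → ℝ
  | 0, x => Real.exp x
  | i + 1, x => Real.exp (fIter i x - 1)


open Finset

variable {α β : Type*} [DecidableEq α] [DecidableEq β]

/-- Map a finpartition of `s` along an embedding. -/
noncomputable def pmap (g : α ↪ β) {s : Finset α} (P : Finpartition s) :
    Finpartition (s.map g) where
  parts := P.parts.image (Finset.image g)
  supIndep := by
    rw [Finset.supIndep_iff_pairwiseDisjoint]
    rintro _ ha _ hb hab
    simp only [Finset.coe_image, Set.mem_image, Finset.mem_coe] at ha hb
    obtain ⟨a, ha, rfl⟩ := ha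
    obtain ⟨b, hb, rfl⟩ := hb
    have : a ≠ b := fun h => hab (by rw [h])
    simpa only [Function.onFun, id_eq, Finset.disjoint_image g.injective] using
      P.disjoint ha hb this
  sup_parts := by
    ext y
    simp only [Finset.mem_sup, Finset.mem_image, Finset.mem_map, id_eq]
    constructor
    · rintro ⟨_, ⟨t, ht, rfl⟩, hy⟩
      rw [Finset.mem_image] at hy
      obtain ⟨x, hx, rfl⟩ := hy
      exact ⟨x, by rw [← P.sup_parts, Finset.mem_sup]; exact ⟨t, ht, hx⟩, rfl⟩
    · rintro ⟨x, hx, rfl⟩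
      rw [← P.sup_parts, Finset.mem_sup] at hx
      obtain ⟨t, ht, hx⟩ := hx
      exact ⟨t.image g, ⟨t, ht, rfl⟩, Finset.mem_image_of_mem g hx⟩
  bot_notMem := by
    simp only [Finset.bot_eq_empty, Finset.mem_image]
    rintro ⟨t, ht, h⟩
    rw [Finset.image_eq_empty] at h
    exact P.bot_notMem (by rw [Finset.bot_eq_empty]; exact h ▸ ht)

@[simp] lemma pmap_parts (g : α ↪ β) {s : Finset α} (P : Finpartition s) :
    (pmap g P).parts = P.parts.image (Finset.image g) := rfl

/-- Pull back a finpartition of `s.map g` along an embedding. -/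
noncomputable def punmap (g : α ↪ β) {s : Finset α} (Q : Finpartition (s.map g)) :
    Finpartition s where
  parts := Q.parts.image (fun t => t.preimage g g.injective.injOn)
  supIndep := by
    rw [Finset.supIndep_iff_pairwiseDisjoint]
    rintro _ ha _ hb hab
    simp only [Finset.coe_image, Set.mem_image, Finset.mem_coe] at ha hb
    obtain ⟨a, ha, rfl⟩ := ha
    obtain ⟨b, hb, rfl⟩ := hb
    have hab' : a ≠ b := fun h => hab (by rw [h])
    have := Q.disjoint ha hb hab'
    simp only [Function.onFun, id_eq] at this ⊢
    rw [Finset.disjoint_left] at this ⊢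
    intro x hx hx'
    rw [Finset.mem_preimage] at hx hx'
    exact this hx hx'
  sup_parts := by
    ext x
    simp only [Finset.mem_sup, Finset.mem_image, id_eq]
    constructor
    · rintro ⟨_, ⟨t, ht, rfl⟩, hx⟩
      rw [Finset.mem_preimage] at hx
      have : g x ∈ s.map g := (Q.le ht) hx
      rw [Finset.mem_map] at this
      obtain ⟨y, hy, hyx⟩ := this
      rwa [← g.injective hyx]
    · intro hx
      have : g x ∈ s.map g := Finset.mem_map_of_mem g hx
      rw [← Q.sup_parts, Finset.mem_sup] at this
      obtain ⟨t, ht, hgx⟩ := this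
      exact ⟨_, ⟨t, ht, rfl⟩, Finset.mem_preimage.2 hgx⟩
  bot_notMem := by
    simp only [Finset.bot_eq_empty, Finset.mem_image]
    rintro ⟨t, ht, h⟩
    obtain ⟨y, hy⟩ := Q.nonempty_of_mem_parts ht
    have : y ∈ s.map g := (Q.le ht) hy
    rw [Finset.mem_map] at this
    obtain ⟨x, _, rfl⟩ := this
    have : x ∈ t.preimage g g.injective.injOn := Finset.mem_preimage.2 hy
    rw [h] at this
    exact absurd this (Finset.notMem_empty x)

private lemma preimage_image' (g : α ↪ β) (u : Finset α) :
    (u.image g).preimage g g.injective.injOn = u :=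
  Finset.coe_injective <| by simp [Set.preimage_image_eq _ g.injective]

private lemma map_preimage_of_subset (g : α ↪ β) {s : Finset α} {t : Finset β}
    (hsub : t ⊆ s.map g) : (t.preimage g g.injective.injOn).image g = t := by
  ext y
  simp only [Finset.mem_image, Finset.mem_preimage]
  constructor
  · rintro ⟨x, hx, rfl⟩; exact hx
  · intro hy
    obtain ⟨x, _, rfl⟩ := Finset.mem_map.1 (hsub hy)
    exact ⟨x, hy, rfl⟩

/-- The equivalence of finpartitions along an embedding. -/
noncomputable def pequiv (g : α ↪ β) (s : Finset α) :
    Finpartition s ≃ Finpartition (s.map g) where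
  toFun := pmap g
  invFun := punmap g
  left_inv P := by
    apply Finpartition.ext
    ext t
    simp only [punmap, pmap_parts, Finset.mem_image]
    constructor
    · rintro ⟨_, ⟨u, hu, rfl⟩, rfl⟩
      rwa [preimage_image']
    · intro ht
      exact ⟨t.image g, ⟨t, ht, rfl⟩, by rw [preimage_image']⟩
  right_inv Q := by
    apply Finpartition.ext
    ext t
    simp only [pmap_parts, punmap, Finset.mem_image]
    constructor
    · rintro ⟨_, ⟨u, hu, rfl⟩, rfl⟩
      rwa [map_preimage_of_subset g (Q.le hu)]
    · intro ht
      exact ⟨t.preimage g g.injective.injOn, ⟨t, ht, rfl⟩,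
        map_preimage_of_subset g (Q.le ht)⟩

lemma pmap_le_pmap_iff (g : α ↪ β) {s : Finset α} {P Q : Finpartition s} :
    pmap g P ≤ pmap g Q ↔ P ≤ Q := by
  constructor
  · intro h a ha
    obtain ⟨c, hc, hac⟩ := h (Finset.mem_image_of_mem _ ha : a.image g ∈ (pmap g P).parts)
    simp only [pmap_parts, Finset.mem_image] at hc
    obtain ⟨b, hb, rfl⟩ := hc
    refine ⟨b, hb, fun x hx => ?_⟩
    have : g x ∈ Finset.image g b := hac (Finset.mem_image_of_mem g hx)
    obtain ⟨x', hx', hxx⟩ := Finset.mem_image.1 this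
    rwa [← g.injective hxx]
  · intro h a ha
    simp only [pmap_parts, Finset.mem_image] at ha
    obtain ⟨b, hb, rfl⟩ := ha
    obtain ⟨c, hc, hbc⟩ := h hb
    exact ⟨c.image g, Finset.mem_image_of_mem _ hc, Finset.image_subset_image hbc⟩

open scoped Classical

/-- Chains of finpartitions of `s`, each refining the previous one. -/
def ChainOn (k : ℕ) {γ : Type*} [DecidableEq γ] (s : Finset γ) :=
  {f : Fin k → Finpartition s //
    ∀ (i : ℕ) (h : i + 1 < k), f ⟨i + 1, h⟩ ≤ f ⟨i, Nat.lt_of_succ_lt h⟩}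

instance {k : ℕ} {γ : Type*} [DecidableEq γ] [Fintype γ] (s : Finset γ) :
    Finite (ChainOn k s) := by
  unfold ChainOn; infer_instance

/-- Transport chains along an embedding. -/
noncomputable def chainOnEquiv (g : α ↪ β) (s : Finset α) (k : ℕ) :
    ChainOn k s ≃ ChainOn k (s.map g) where
  toFun c := ⟨fun i => pmap g (c.1 i), fun i h => (pmap_le_pmap_iff g).2 (c.2 i h)⟩
  invFun c := ⟨fun i => (pequiv g s).symm (c.1 i), by
    intro i h
    rw [← pmap_le_pmap_iff g]
    have e1 : pmap g ((pequiv g s).symm (c.1 ⟨i + 1, h⟩)) = c.1 ⟨i + 1, h⟩ :=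
      (pequiv g s).apply_symm_apply _
    have e2 : pmap g ((pequiv g s).symm (c.1 ⟨i, Nat.lt_of_succ_lt h⟩)) =
        c.1 ⟨i, Nat.lt_of_succ_lt h⟩ := (pequiv g s).apply_symm_apply _
    rw [show (pmap g ((pequiv g s).symm (c.1 ⟨i+1, h⟩))) = c.1 ⟨i+1,h⟩ from e1, e2]
    exact c.2 i h⟩
  left_inv c := by
    apply Subtype.ext
    funext i
    exact (pequiv g s).symm_apply_apply _
  right_inv c := by
    apply Subtype.ext
    funext i
    exact (pequiv g s).apply_symm_apply _

lemma bellk_eq_card_chainOn (k p : ℕ) :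
    bellk k p = Nat.card (ChainOn k (Finset.univ : Finset (Fin p))) := rfl

lemma univ_map_orderEmbOfFin {n m : ℕ} (s : Finset (Fin n)) (h : s.card = m) :
    (Finset.univ : Finset (Fin m)).map (s.orderEmbOfFin h).toEmbedding = s := by
  ext y
  simp only [Finset.mem_map, Finset.mem_univ, true_and, RelEmbedding.coe_toEmbedding]
  constructor
  · rintro ⟨x, rfl⟩
    exact Finset.orderEmbOfFin_mem s h x
  · intro hy
    have : y ∈ Set.range (s.orderEmbOfFin h) := by
      rw [Finset.range_orderEmbOfFin]; exact hy
    obtain ⟨x, hx⟩ := this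
    exact ⟨x, hx⟩

lemma card_chainOn {n : ℕ} (k : ℕ) (s : Finset (Fin n)) :
    Nat.card (ChainOn k s) = bellk k s.card := by
  rw [bellk_eq_card_chainOn]
  have := univ_map_orderEmbOfFin s rfl
  exact (Nat.card_congr
    ((chainOnEquiv (s.orderEmbOfFin rfl).toEmbedding Finset.univ k).trans
      (by rw [this]))).symm

section Restrict

variable {γ : Type*} [DecidableEq γ]

/-- Restrict a finpartition to a union of its parts. -/
noncomputable def prestrict {s : Finset γ} (P : Finpartition s) (B : Finset γ)
    (hBs : B ⊆ s) (hcases : ∀ t ∈ P.parts, t ⊆ B ∨ Disjoint t B) : Finpartition B :=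
  P.ofSubset (Finset.filter_subset (· ⊆ B) P.parts) (by
    apply le_antisymm
    · exact Finset.sup_le fun t ht => (Finset.mem_filter.1 ht).2
    · intro x hx
      have hxs : x ∈ s := hBs hx
      rw [← P.sup_parts, Finset.mem_sup] at hxs
      obtain ⟨t, ht, hxt⟩ := hxs
      rcases hcases t ht with h | h
      · rw [Finset.mem_sup]
        exact ⟨t, Finset.mem_filter.2 ⟨ht, h⟩, hxt⟩
      · exact absurd hx (Finset.disjoint_left.1 h hxt))

@[simp] lemma prestrict_parts {s : Finset γ} (P : Finpartition s) (B : Finset γ)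
    (hBs : B ⊆ s) (hcases : ∀ t ∈ P.parts, t ⊆ B ∨ Disjoint t B) :
    (prestrict P B hBs hcases).parts = P.parts.filter (· ⊆ B) := rfl

lemma prestrict_mono {s : Finset γ} {P Q : Finpartition s} (B : Finset γ)
    (hBs : B ⊆ s) (hc1 : ∀ t ∈ P.parts, t ⊆ B ∨ Disjoint t B)
    (hc2 : ∀ t ∈ Q.parts, t ⊆ B ∨ Disjoint t B) (hPQ : P ≤ Q) :
    prestrict P B hBs hc1 ≤ prestrict Q B hBs hc2 := by
  intro a ha
  rw [prestrict_parts, Finset.mem_filter] at ha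
  obtain ⟨haP, haB⟩ := ha
  obtain ⟨b, hb, hab⟩ := hPQ haP
  refine ⟨b, ?_, hab⟩
  rw [prestrict_parts, Finset.mem_filter]
  refine ⟨hb, ?_⟩
  rcases hc2 b hb with h | h
  · exact h
  · obtain ⟨x, hx⟩ := P.nonempty_of_mem_parts haP
    exact absurd (haB hx) (Finset.disjoint_left.1 h (hab hx))

end Restrict

section Injection

variable {n : ℕ} [NeZero n]

/-- chains are antitone -/
lemma chain_antitone {k : ℕ} {γ : Type*} [DecidableEq γ] {s : Finset γ}
    (c : ChainOn k s) : ∀ (i j : ℕ) (hij : i ≤ j) (hj : j < k),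
    c.1 ⟨j, hj⟩ ≤ c.1 ⟨i, lt_of_le_of_lt hij hj⟩ := by
  intro i j
  induction j with
  | zero => intro hij hj; obtain rfl : i = 0 := Nat.le_zero.1 hij; exact le_rfl
  | succ m ih =>
    intro hij hj
    rcases Nat.eq_or_lt_of_le hij with rfl | hlt
    · exact le_rfl
    · have him : i ≤ m := by omega
      exact (c.2 m hj).trans (ih him (Nat.lt_of_succ_lt hj))

variable {k p : ℕ}

/-- The block of `0` in the top partition of the chain. -/
noncomputable def blk (c : ChainOn (k + 1) (Finset.univ : Finset (Fin (p + 1)))) :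
    Finset (Fin (p + 1)) :=
  (c.1 ⟨0, Nat.succ_pos k⟩).part 0

lemma blk_mem (c : ChainOn (k + 1) (Finset.univ : Finset (Fin (p + 1)))) :
    blk c ∈ (c.1 ⟨0, Nat.succ_pos k⟩).parts :=
  (Finpartition.part_mem _).2 (Finset.mem_univ _)

lemma mem_blk (c : ChainOn (k + 1) (Finset.univ : Finset (Fin (p + 1)))) :
    (0 : Fin (p + 1)) ∈ blk c :=
  Finpartition.mem_part _ (Finset.mem_univ _)

lemma blk_cases (c : ChainOn (k + 1) (Finset.univ : Finset (Fin (p + 1))))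
    (i : ℕ) (hi : i < k + 1) :
    ∀ t ∈ (c.1 ⟨i, hi⟩).parts, t ⊆ blk c ∨ Disjoint t (blk c) := by
  intro t ht
  obtain ⟨b, hb, htb⟩ := chain_antitone c 0 i (Nat.zero_le _) hi ht
  by_cases hbB : b = blk c
  · exact Or.inl (hbB ▸ htb)
  · exact Or.inr (Finset.disjoint_left.2 fun x hxt hxB =>
      hbB ((c.1 ⟨0, Nat.succ_pos k⟩).eq_of_mem_parts hb (blk_mem c) (htb hxt) hxB))

lemma blk_cases' (c : ChainOn (k + 1) (Finset.univ : Finset (Fin (p + 1))))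
    (i : ℕ) (hi : i < k + 1) :
    ∀ t ∈ (c.1 ⟨i, hi⟩).parts, t ⊆ Finset.univ \ blk c ∨ Disjoint t (Finset.univ \ blk c) := by
  intro t ht
  rcases blk_cases c i hi t ht with h | h
  · exact Or.inr (Finset.disjoint_left.2 fun x hxt hxD =>
      (Finset.mem_sdiff.1 hxD).2 (h hxt))
  · exact Or.inl fun x hxt => Finset.mem_sdiff.2
      ⟨Finset.mem_univ x, fun hxB => Finset.disjoint_left.1 h hxt hxB⟩

/-- The decomposition map. -/
noncomputable def phi (c : ChainOn (k + 1) (Finset.univ : Finset (Fin (p + 1)))) :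
    Σ B : {B : Finset (Fin (p + 1)) // (0 : Fin (p + 1)) ∈ B},
      ChainOn k B.1 × ChainOn (k + 1) ((Finset.univ : Finset (Fin (p + 1))) \ B.1) :=
  ⟨⟨blk c, mem_blk c⟩,
    ⟨fun i => prestrict (c.1 i.succ) (blk c) ((c.1 ⟨0, Nat.succ_pos k⟩).le (blk_mem c))
        (blk_cases c i.succ i.succ.2),
      by
        intro i h
        exact prestrict_mono _ _ _ _
          (c.2 (i + 1) (by omega))⟩,
    ⟨fun i => prestrict (c.1 i) (Finset.univ \ blk c) (Finset.sdiff_subset)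
        (blk_cases' c i i.2),
      by
        intro i h
        exact prestrict_mono _ _ _ _ (c.2 i h)⟩⟩

/-- Reconstruct the parts of each level from the decomposition. -/
noncomputable def recon
    (σ : Σ B : {B : Finset (Fin (p + 1)) // (0 : Fin (p + 1)) ∈ B},
      ChainOn k B.1 × ChainOn (k + 1) ((Finset.univ : Finset (Fin (p + 1))) \ B.1))
    (i : Fin (k + 1)) : Finset (Finset (Fin (p + 1))) :=
  (Fin.cases ({σ.1.1} : Finset (Finset (Fin (p + 1)))) (fun j => (σ.2.1.1 j).parts) i)
    ∪ (σ.2.2.1 i).parts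

lemma recon_phi (c : ChainOn (k + 1) (Finset.univ : Finset (Fin (p + 1))))
    (i : Fin (k + 1)) : recon (phi c) i = (c.1 i).parts := by
  induction i using Fin.cases with
  | zero =>
    show ({blk c} : Finset (Finset (Fin (p+1)))) ∪
      ((c.1 0).parts.filter (· ⊆ Finset.univ \ blk c)) = (c.1 0).parts
    ext t
    simp only [Finset.mem_union, Finset.mem_singleton, Finset.mem_filter]
    constructor
    · rintro (rfl | ⟨ht, _⟩)
      · have := blk_mem c
        convert this using 2
        exact congrArg _ (Fin.ext rfl)
      · exact ht
    · intro ht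
      have h0 : (0 : Fin (k+1)) = ⟨0, Nat.succ_pos k⟩ := Fin.ext rfl
      rcases blk_cases c 0 (Nat.succ_pos k) t (by rw [← h0] at *; exact ht) with h | h
      · left
        obtain ⟨x, hx⟩ := (c.1 0).nonempty_of_mem_parts ht
        exact (c.1 0).eq_of_mem_parts ht (h0 ▸ blk_mem c) hx (h hx)
      · right
        refine ⟨ht, fun x hx => Finset.mem_sdiff.2
          ⟨Finset.mem_univ x, fun hxB => Finset.disjoint_left.1 h hx hxB⟩⟩
  | succ j =>
    show ((c.1 j.succ).parts.filter (· ⊆ blk c)) ∪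
      ((c.1 j.succ).parts.filter (· ⊆ Finset.univ \ blk c)) = (c.1 j.succ).parts
    ext t
    simp only [Finset.mem_union, Finset.mem_filter]
    constructor
    · rintro (⟨ht, _⟩ | ⟨ht, _⟩) <;> exact ht
    · intro ht
      have hjs : (j.succ : Fin (k+1)) = ⟨(j : ℕ) + 1, j.succ.2⟩ := Fin.ext rfl
      rcases blk_cases c ((j : ℕ) + 1) j.succ.2 t (by rw [← hjs] at *; exact ht) with h | h
      · exact Or.inl ⟨ht, h⟩
      · exact Or.inr ⟨ht, fun x hx => Finset.mem_sdiff.2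
          ⟨Finset.mem_univ x, fun hxB => Finset.disjoint_left.1 h hx hxB⟩⟩

lemma phi_injective :
    Function.Injective (phi (k := k) (p := p)) := by
  intro c c' h
  apply Subtype.ext
  funext i
  apply Finpartition.ext
  rw [← recon_phi c i, ← recon_phi c' i, h]

lemma nat_card_sigma {ι : Type*} [Fintype ι] (F : ι → Type*) [∀ i, Finite (F i)] :
    Nat.card (Σ i, F i) = ∑ i, Nat.card (F i) := by
  letI : ∀ i, Fintype (F i) := fun i => Fintype.ofFinite (F i)
  simp [Nat.card_eq_fintype_card]

lemma card_univ_sdiff {n : ℕ} (B : Finset (Fin n)) :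
    ((Finset.univ : Finset (Fin n)) \ B).card = n - B.card := by
  rw [Finset.card_sdiff, Finset.inter_univ, Finset.card_univ, Fintype.card_fin]

/-- The key combinatorial recursion for higher Bell numbers. -/
lemma bell_rec (k p : ℕ) :
    bellk (k + 1) (p + 1) ≤
      ∑ j ∈ Finset.range (p + 1),
        p.choose j * (bellk k (j + 1) * bellk (k + 1) (p - j)) := by
  rw [bellk_eq_card_chainOn]
  have h1 : Nat.card (ChainOn (k + 1) (Finset.univ : Finset (Fin (p + 1)))) ≤
      Nat.card (Σ B : {B : Finset (Fin (p + 1)) // (0 : Fin (p + 1)) ∈ B},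
        ChainOn k B.1 × ChainOn (k + 1) ((Finset.univ : Finset (Fin (p + 1))) \ B.1)) :=
    Nat.card_le_card_of_injective _ phi_injective
  refine h1.trans (le_of_eq ?_)
  rw [nat_card_sigma]
  have h2 : ∀ B : {B : Finset (Fin (p + 1)) // (0 : Fin (p + 1)) ∈ B},
      Nat.card (ChainOn k B.1 × ChainOn (k + 1) ((Finset.univ : Finset (Fin (p + 1))) \ B.1))
        = bellk k B.1.card * bellk (k + 1) (p + 1 - B.1.card) := by
    intro B
    rw [Nat.card_prod, card_chainOn, card_chainOn, card_univ_sdiff]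
  rw [Finset.sum_congr rfl (fun B _ => h2 B)]
  -- sum over subtype to sum over filtered finset
  rw [← Finset.sum_subtype (Finset.univ.filter (fun B : Finset (Fin (p + 1)) => 0 ∈ B))
    (by intro B; simp) (fun B => bellk k B.card * bellk (k + 1) (p + 1 - B.card))]
  -- reindex by erasing 0
  have h3 : ∑ B ∈ Finset.univ.filter (fun B : Finset (Fin (p + 1)) => 0 ∈ B),
      bellk k B.card * bellk (k + 1) (p + 1 - B.card)
      = ∑ S ∈ ((Finset.univ : Finset (Fin (p + 1))).erase 0).powerset,
          bellk k (S.card + 1) * bellk (k + 1) (p + 1 - (S.card + 1)) := by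
    refine Finset.sum_bij' (fun B _ => B.erase 0) (fun S _ => insert 0 S) ?_ ?_ ?_ ?_ ?_
    · intro B hB
      simp only [Finset.mem_filter, Finset.mem_univ, true_and] at hB
      rw [Finset.mem_powerset]
      exact Finset.erase_subset_erase 0 (Finset.subset_univ B)
    · intro S hS
      simp only [Finset.mem_filter, Finset.mem_univ, true_and]
      exact Finset.mem_insert_self 0 S
    · intro B hB
      simp only [Finset.mem_filter, Finset.mem_univ, true_and] at hB
      exact Finset.insert_erase hB
    · intro S hS
      rw [Finset.mem_powerset] at hS
      refine Finset.erase_insert (fun h0 => ?_)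
      exact absurd (hS h0) (Finset.notMem_erase 0 _)
    · intro B hB
      simp only [Finset.mem_filter, Finset.mem_univ, true_and] at hB
      rw [Finset.card_erase_of_mem hB]
      have : 1 ≤ B.card := Finset.card_pos.2 ⟨0, hB⟩
      congr 2 <;> omega
  rw [h3]
  have hcard : ((Finset.univ : Finset (Fin (p + 1))).erase 0).card = p := by
    rw [Finset.card_erase_of_mem (Finset.mem_univ 0), Finset.card_univ, Fintype.card_fin]
    omega
  rw [Finset.sum_powerset_apply_card
    (fun m => bellk k (m + 1) * bellk (k + 1) (p + 1 - (m + 1))), hcard]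
  refine Finset.sum_congr rfl fun j _ => ?_
  rw [smul_eq_mul]
  have : p + 1 - (j + 1) = p - j := by omega
  rw [this]

end Injection

section SmallCards

lemma fpRefines_refl {p : ℕ} (P : Finpartition (Finset.univ : Finset (Fin p))) :
    FPRefines P P := fun a ha => ⟨a, ha, subset_rfl⟩

lemma bellk_of_subsingleton {k p : ℕ}
    (h : Subsingleton (Finpartition (Finset.univ : Finset (Fin p))))
    (P0 : Finpartition (Finset.univ : Finset (Fin p))) : bellk k p = 1 := by
  rw [bellk]
  haveI : Subsingleton
      {f : Fin k → Finpartition (Finset.univ : Finset (Fin p)) // IsKLevel k f} :=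
    ⟨fun f g => Subtype.ext (funext fun i => h.elim _ _)⟩
  haveI : Nonempty
      {f : Fin k → Finpartition (Finset.univ : Finset (Fin p)) // IsKLevel k f} :=
    ⟨⟨fun _ => P0, fun i hi => by
      have : P0 = P0 := rfl
      have := fpRefines_refl P0
      convert fpRefines_refl P0 using 2 <;> exact h.elim _ _⟩⟩
  exact Nat.card_unique

lemma bellk_zero_left (p : ℕ) : bellk 0 p = 1 := by
  rw [bellk]
  haveI : Unique {f : Fin 0 → Finpartition (Finset.univ : Finset (Fin p)) // IsKLevel 0 f} :=
    ⟨⟨⟨fun i => i.elim0, fun i hi => by omega⟩⟩,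
      fun f => Subtype.ext (funext fun i => i.elim0)⟩
  exact Nat.card_unique

lemma bellk_zero_right (k : ℕ) : bellk k 0 = 1 := by
  have huniv : (Finset.univ : Finset (Fin 0)) = (⊥ : Finset (Fin 0)) := by simp
  have hsub : Subsingleton (Finpartition (Finset.univ : Finset (Fin 0))) :=
    ⟨fun P Q => Finpartition.ext (by
      rw [Finpartition.parts_eq_empty_iff.2 huniv, Finpartition.parts_eq_empty_iff.2 huniv])⟩
  exact bellk_of_subsingleton hsub ((Finpartition.empty (Finset (Fin 0))).copy huniv.symm)

lemma bellk_one_right (k : ℕ) : bellk k 1 = 1 := by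
  have huniv : (Finset.univ : Finset (Fin 1)) = ({0} : Finset (Fin 1)) := by
    ext x; simp [Subsingleton.elim x 0]
  have hatom : IsAtom (Finset.univ : Finset (Fin 1)) := by
    rw [huniv]; exact Finset.isAtom_singleton 0
  haveI := hatom.uniqueFinpartition (P := Finpartition.indiscrete hatom.1)
  exact bellk_of_subsingleton (by infer_instance) (Finpartition.indiscrete hatom.1)

end SmallCards

section Analysis

open Real

/-- Derivative of `fIter`. -/
noncomputable def dIter : ℕ → ℝ → ℝ
  | 0, x => Real.exp x
  | i + 1, x => fIter (i + 1) x * dIter i x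

lemma fIter_hasDerivAt (k : ℕ) (x : ℝ) : HasDerivAt (fIter k) (dIter k x) x := by
  induction k generalizing x with
  | zero => exact Real.hasDerivAt_exp x
  | succ k ih =>
    have h1 : HasDerivAt (fun y => fIter k y - 1) (dIter k x) x := (ih x).sub_const 1
    have h2 := h1.exp
    exact h2

lemma fIter_zero_eval (k : ℕ) : fIter k 0 = 1 := by
  induction k with
  | zero => simp [fIter]
  | succ k ih => simp [fIter, ih]

lemma one_le_fIter (k : ℕ) {x : ℝ} (hx : 0 ≤ x) : 1 ≤ fIter k x := by
  induction k with
  | zero => exact Real.one_le_exp hx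
  | succ k ih =>
    show (1 : ℝ) ≤ Real.exp (fIter k x - 1)
    exact Real.one_le_exp (by linarith)

lemma one_le_dIter (k : ℕ) {x : ℝ} (hx : 0 ≤ x) : 1 ≤ dIter k x := by
  induction k with
  | zero => exact Real.one_le_exp hx
  | succ k ih =>
    show (1 : ℝ) ≤ fIter (k + 1) x * dIter k x
    nlinarith [one_le_fIter (k + 1) hx]

/-- Partial sums of the conjectural series of `fIter k`. -/
noncomputable def SB (k P : ℕ) (x : ℝ) : ℝ :=
  ∑ q ∈ Finset.range (P + 1), (bellk k q : ℝ) * x ^ q / q.factorial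

/-- Partial sums of the conjectural series of `dIter k`. -/
noncomputable def DB (k P : ℕ) (x : ℝ) : ℝ :=
  ∑ q ∈ Finset.range (P + 1), (bellk k (q + 1) : ℝ) * x ^ q / q.factorial

lemma SB_nonneg (k P : ℕ) {x : ℝ} (hx : 0 ≤ x) : 0 ≤ SB k P x :=
  Finset.sum_nonneg fun q _ => by positivity

lemma DB_nonneg (k P : ℕ) {x : ℝ} (hx : 0 ≤ x) : 0 ≤ DB k P x :=
  Finset.sum_nonneg fun q _ => by positivity

lemma SB_zero_eval (k P : ℕ) : SB k P 0 = 1 := by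
  rw [SB, Finset.sum_eq_single_of_mem 0 (Finset.mem_range.2 (Nat.succ_pos P))]
  · simp [bellk_zero_right]
  · intro q _ hq
    simp [zero_pow hq]

lemma SB_hasDerivAt (k P : ℕ) (x : ℝ) : HasDerivAt (SB k (P + 1)) (DB k P x) x := by
  have h : HasDerivAt (SB k (P + 1))
      (∑ q ∈ Finset.range (P + 2),
        (bellk k q : ℝ) * ((q : ℝ) * x ^ (q - 1)) / q.factorial) x := by
    unfold SB
    apply HasDerivAt.fun_sum
    intro q _
    exact ((hasDerivAt_pow q x).const_mul _).div_const _
  convert h using 1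
  rw [DB, Finset.sum_range_succ' (fun q => (bellk k q : ℝ) * ((q:ℝ) * x ^ (q - 1)) / q.factorial)]
  simp only [Nat.cast_zero, zero_mul, mul_zero, zero_div, add_zero]
  refine Finset.sum_congr rfl fun q _ => ?_
  rw [Nat.factorial_succ]
  have h1 : (q.factorial : ℝ) ≠ 0 := Nat.cast_ne_zero.2 q.factorial_ne_zero
  have h2 : ((q : ℝ) + 1) ≠ 0 := by positivity
  push_cast [Nat.add_sub_cancel]
  field_simp

lemma S_of_D (k P : ℕ) (hD : ∀ x : ℝ, 0 ≤ x → DB k P x ≤ dIter k x) :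
    ∀ x : ℝ, 0 ≤ x → SB k (P + 1) x ≤ fIter k x := by
  intro x hx
  set g := fun y : ℝ => fIter k y - SB k (P + 1) y with hg
  have hgd : ∀ y : ℝ, HasDerivAt g (dIter k y - DB k P y) y :=
    fun y => (fIter_hasDerivAt k y).sub (SB_hasDerivAt k P y)
  have hmono : MonotoneOn g (Set.Ici (0 : ℝ)) := by
    apply monotoneOn_of_deriv_nonneg (convex_Ici 0)
    · exact (Continuous.continuousOn (by
        rw [continuous_iff_continuousAt]
        exact fun y => (hgd y).continuousAt))
    · intro y _
      exact ((hgd y).differentiableAt).differentiableWithinAt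
    · intro y hy
      rw [interior_Ici] at hy
      rw [(hgd y).deriv]
      have := hD y (le_of_lt hy)
      linarith
  have h0 : g 0 ≤ g x := hmono (Set.mem_Ici.2 le_rfl) (Set.mem_Ici.2 hx) hx
  have hg0 : g 0 = 0 := by
    simp [hg, fIter_zero_eval, SB_zero_eval]
  rw [hg0] at h0
  simp only [hg] at h0
  linarith

end Analysis

section CoreStep

lemma term_eq (k : ℕ) (x : ℝ) {j q : ℕ} (hjq : j ≤ q) :
    ((q.choose j * (bellk k (j + 1) * bellk (k + 1) (q - j)) : ℕ) : ℝ) * x ^ q / q.factorial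
      = ((bellk k (j + 1) : ℝ) * x ^ j / j.factorial) *
        ((bellk (k + 1) (q - j) : ℝ) * x ^ (q - j) / (q - j).factorial) := by
  have hfact : q.choose j * j.factorial * (q - j).factorial = q.factorial :=
    Nat.choose_mul_factorial_mul_factorial hjq
  have hfR : (q.choose j : ℝ) * (j.factorial : ℝ) * ((q - j).factorial : ℝ)
      = (q.factorial : ℝ) := by exact_mod_cast hfact
  have hx2 : x ^ j * x ^ (q - j) = x ^ q := by
    rw [← pow_add]
    congr 1
    omega
  have h1 : (j.factorial : ℝ) ≠ 0 := Nat.cast_ne_zero.2 j.factorial_ne_zero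
  have h2 : ((q - j).factorial : ℝ) ≠ 0 := Nat.cast_ne_zero.2 (q - j).factorial_ne_zero
  have h3 : (q.factorial : ℝ) ≠ 0 := Nat.cast_ne_zero.2 q.factorial_ne_zero
  have h4 : (q.choose j : ℝ) ≠ 0 := Nat.cast_ne_zero.2 (Nat.choose_pos hjq).ne'
  rw [← hfR, ← hx2]
  push_cast
  field_simp

lemma DB_le_mul (k P : ℕ) {x : ℝ} (hx : 0 ≤ x) :
    DB (k + 1) (P + 1) x ≤ DB k (P + 1) x * SB (k + 1) (P + 1) x := by
  set u := fun a : ℕ => (bellk k (a + 1) : ℝ) * x ^ a / a.factorial with hu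
  set v := fun b : ℕ => (bellk (k + 1) b : ℝ) * x ^ b / b.factorial with hv
  have hun : ∀ a, 0 ≤ u a := fun a => by rw [hu]; positivity
  have hvn : ∀ b, 0 ≤ v b := fun b => by rw [hv]; positivity
  have step1 : DB (k + 1) (P + 1) x ≤
      ∑ q ∈ Finset.range (P + 2), ∑ j ∈ Finset.range (q + 1), u j * v (q - j) := by
    apply Finset.sum_le_sum
    intro q _
    have hb := bell_rec k q
    have hcast : (bellk (k + 1) (q + 1) : ℝ) ≤
        ((∑ j ∈ Finset.range (q + 1),
          q.choose j * (bellk k (j + 1) * bellk (k + 1) (q - j)) : ℕ) : ℝ) := by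
      exact_mod_cast hb
    calc (bellk (k + 1) (q + 1) : ℝ) * x ^ q / q.factorial
        ≤ ((∑ j ∈ Finset.range (q + 1),
            q.choose j * (bellk k (j + 1) * bellk (k + 1) (q - j)) : ℕ) : ℝ)
            * x ^ q / q.factorial := by gcongr
      _ = ∑ j ∈ Finset.range (q + 1), u j * v (q - j) := by
          rw [Nat.cast_sum, Finset.sum_mul, Finset.sum_div]
          refine Finset.sum_congr rfl fun j hj => ?_
          have hjq : j ≤ q := by
            rw [Finset.mem_range] at hj; omega
          have := term_eq k x hjq
          rw [hu, hv]
          push_cast at this ⊢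
          exact this
  refine step1.trans ?_
  have step2 : ∑ q ∈ Finset.range (P + 2), ∑ j ∈ Finset.range (q + 1), u j * v (q - j)
      = ∑ ab ∈ (Finset.range (P + 2) ×ˢ Finset.range (P + 2)).filter
          (fun ab => ab.1 + ab.2 ≤ P + 1), u ab.1 * v ab.2 := by
    rw [Finset.sum_sigma']
    refine Finset.sum_bij' (fun a _ => (a.2, a.1 - a.2)) (fun ab _ => ⟨ab.1 + ab.2, ab.1⟩)
      ?_ ?_ ?_ ?_ ?_
    · rintro ⟨q, j⟩ ha
      simp only [Finset.mem_sigma, Finset.mem_range] at ha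
      simp only [Finset.mem_filter, Finset.mem_product, Finset.mem_range]
      omega
    · rintro ⟨a, b⟩ hab
      simp only [Finset.mem_filter, Finset.mem_product, Finset.mem_range] at hab
      simp only [Finset.mem_sigma, Finset.mem_range]
      omega
    · rintro ⟨q, j⟩ ha
      simp only [Finset.mem_sigma, Finset.mem_range] at ha
      have hq : j + (q - j) = q := by omega
      exact Sigma.ext hq (by simp)
    · rintro ⟨a, b⟩ hab
      simp only [Finset.mem_filter, Finset.mem_product, Finset.mem_range] at hab
      dsimp only
      simp only [Prod.mk.injEq]
      exact ⟨trivial, by omega⟩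
    · rintro ⟨q, j⟩ ha
      rfl
  rw [step2]
  calc ∑ ab ∈ (Finset.range (P + 2) ×ˢ Finset.range (P + 2)).filter
          (fun ab => ab.1 + ab.2 ≤ P + 1), u ab.1 * v ab.2
      ≤ ∑ ab ∈ Finset.range (P + 2) ×ˢ Finset.range (P + 2), u ab.1 * v ab.2 := by
        apply Finset.sum_le_sum_of_subset_of_nonneg (Finset.filter_subset _ _)
        intro ab _ _
        exact mul_nonneg (hun _) (hvn _)
    _ = DB k (P + 1) x * SB (k + 1) (P + 1) x := by
        rw [DB, SB, Finset.sum_mul_sum]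
        rw [Finset.sum_product]

end CoreStep

lemma main_D (k : ℕ) : ∀ (P : ℕ) (x : ℝ), 0 ≤ x → DB k P x ≤ dIter k x := by
  induction k with
  | zero =>
    intro P x hx
    have h : DB 0 P x = ∑ q ∈ Finset.range (P + 1), x ^ q / q.factorial := by
      refine Finset.sum_congr rfl fun q _ => ?_
      rw [bellk_zero_left, Nat.cast_one, one_mul]
    rw [h]
    exact Real.sum_le_exp_of_nonneg hx (P + 1)
  | succ k ihk =>
    intro P
    induction P with
    | zero =>
      intro x hx
      have h : DB (k + 1) 0 x = 1 := by
        simp [DB, bellk_one_right]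
      rw [h]
      show (1 : ℝ) ≤ fIter (k + 1) x * dIter k x
      nlinarith [one_le_fIter (k + 1) hx, one_le_dIter k hx]
    | succ P ihP =>
      intro x hx
      have hS := S_of_D (k + 1) P ihP
      have hd0 : (0 : ℝ) ≤ dIter k x := by linarith [one_le_dIter k hx]
      calc DB (k + 1) (P + 1) x
          ≤ DB k (P + 1) x * SB (k + 1) (P + 1) x := DB_le_mul k P hx
        _ ≤ dIter k x * fIter (k + 1) x :=
            mul_le_mul (ihk (P + 1) x hx) (hS x hx) (SB_nonneg _ _ hx) hd0
        _ = dIter (k + 1) x := by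
            show dIter k x * fIter (k + 1) x = fIter (k + 1) x * dIter k x
            ring

theorem bellk_le_fIter' (k p : ℕ) (hp : 1 ≤ p) (x : ℝ) (hx : 0 < x) :
    (bellk k p : ℝ) * x ^ p ≤ (p.factorial : ℝ) * (fIter k x - 1) := by
  obtain ⟨m, rfl⟩ : ∃ m, p = m + 1 := ⟨p - 1, by omega⟩
  have hS : SB k (m + 1) x ≤ fIter k x := S_of_D k m (main_D k m) x hx.le
  have hlow : 1 + (bellk k (m + 1) : ℝ) * x ^ (m + 1) / (m + 1).factorial
      ≤ SB k (m + 1) x := by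
    rw [SB, Finset.sum_range_succ]
    have h1 : (1 : ℝ) ≤ ∑ q ∈ Finset.range (m + 1), (bellk k q : ℝ) * x ^ q / q.factorial := by
      have h0 : (bellk k 0 : ℝ) * x ^ 0 / (0).factorial = 1 := by
        simp [bellk_zero_right]
      calc (1 : ℝ) = (bellk k 0 : ℝ) * x ^ 0 / (0).factorial := h0.symm
        _ ≤ _ := Finset.single_le_sum (f := fun q => (bellk k q : ℝ) * x ^ q / q.factorial)
            (fun q _ => by positivity) (Finset.mem_range.2 (Nat.succ_pos m))
    linarith
  have hdiv : (bellk k (m + 1) : ℝ) * x ^ (m + 1) / (m + 1).factorial ≤ fIter k x - 1 := by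
    linarith
  have hfac : (0 : ℝ) < ((m + 1).factorial : ℝ) := by
    exact_mod_cast (m + 1).factorial_pos
  rw [div_le_iff₀ hfac] at hdiv
  linarith [hdiv]


/-- For every `k ≥ 0`, `p ≥ 1` and real `x > 0`,
`bell_k(p) · x^p ≤ p! · (f_k(x) − 1)`. -/
theorem bellk_le_fIter (k p : ℕ) (hp : 1 ≤ p) (x : ℝ) (hx : 0 < x) :
    (bellk k p : ℝ) * x ^ p ≤ (p.factorial : ℝ) * (fIter k x - 1) :=
  bellk_le_fIter' k p hp x hx
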